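/- Soundness of the basic DPLL transition system: if ([], F₀) →d* (M, F) where →d is the union of the decide, unitPropagate, and backtrack rules, then (1) if DecVars ⊇ vars F₀ and (M, F) is an accepting state, then F₀ is satisfiable and M is a model of F₀; (2) if (M, F) is a rejecting state, then F₀ is unsatisfiable. -/

import Mathlib

namespace SatFormal

/-- Propositional literals: positive or negative variables (variables are naturals). -/
inductive Literal where
  | Pos : Nat → Literal
  | Neg : Nat → Literal
deriving DecidableEq, Repr

/-- The variable of a literal. -/
def Literal.var : Literal → Nat
  | .Pos n => n
  | .Neg n => n

/-- The opposite literal. -/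
def Literal.opp : Literal → Literal
  | .Pos n => .Neg n
  | .Neg n => .Pos n

abbrev Clause := List Literal
abbrev Formula := List Clause
/-- A trail is a list of annotated literals: (literal, decision flag). -/
abbrev Trail := List (Literal × Bool)

/-- Underlying literals of a trail. -/
def elements (M : Trail) : List Literal := M.map Prod.fst
/-- Decision literals of a trail. -/
def decisions (M : Trail) : List Literal := (M.filter (fun a => a.2)).map Prod.fst
/-- Number of decision literals. -/
def currentLevel (M : Trail) : Nat := (M.filter (fun a => a.2)).length

/-- Prefix of the trail up to and including the first occurrence of literal `l`. -/
def prefixTo (l : Literal) (M : Trail) : Trail :=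
  M.takeWhile (fun a => decide (a.1 ≠ l)) ++ (M.dropWhile (fun a => decide (a.1 ≠ l))).take 1

/-- Decision literals preceding the first occurrence of `l` (including `l` if it is one). -/
def decisionsTo (l : Literal) (M : Trail) : List Literal := decisions (prefixTo l M)

/-- Decision level of a literal in a trail. -/
def levelOf (l : Literal) (M : Trail) : Nat := (decisionsTo l M).length

/-- Longest prefix of the trail containing only elements of level ≤ `lv`. -/
def prefixToLevel (lv : Nat) : Trail → Trail
  | [] => []
  | a :: M =>
      if a.2 then (if 0 < lv then a :: prefixToLevel (lv - 1) M else [])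
      else a :: prefixToLevel lv M

/-- The last decision literal of a trail (default `Pos 0` when there is none). -/
def lastDecision (M : Trail) : Literal := (decisions M).getLastD (Literal.Pos 0)

/-- The prefix of the trail before its last decision literal. -/
def prefixBeforeLastDecision (M : Trail) : Trail :=
  ((M.reverse.dropWhile (fun a => !a.2)).tail).reverse

/-- A clause is true in a valuation. -/
def clauseTrue (v : List Literal) (c : Clause) : Prop := ∃ l ∈ c, l ∈ v
/-- A formula is true in a valuation. -/
def formulaTrue (v : List Literal) (F : Formula) : Prop := ∀ c ∈ F, clauseTrue v c
/-- A clause is false in a valuation. -/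
def clauseFalse (v : List Literal) (c : Clause) : Prop := ∀ l ∈ c, l.opp ∈ v
/-- A formula is false in a valuation. -/
def formulaFalse (v : List Literal) (F : Formula) : Prop := ∃ c ∈ F, clauseFalse v c
/-- Consistency of a valuation. -/
def consistent (v : List Literal) : Prop := ¬ ∃ l, l ∈ v ∧ Literal.opp l ∈ v
/-- A model of a formula. -/
def isModel (v : List Literal) (F : Formula) : Prop := consistent v ∧ formulaTrue v F
/-- Satisfiability. -/
def sat (F : Formula) : Prop := ∃ v, isModel v F
/-- A formula entails a clause. -/
def entailsClause (F : Formula) (c : Clause) : Prop := ∀ v, isModel v F → clauseTrue v c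
/-- A formula entails a literal. -/
def entailsLit (F : Formula) (l : Literal) : Prop := ∀ v, isModel v F → l ∈ v
/-- Logical equivalence of formulae. -/
def equivFormula (F1 F2 : Formula) : Prop := ∀ v, isModel v F1 ↔ isModel v F2

/-- Variables of a formula. -/
def varsF (F : Formula) : Set Nat := {n | ∃ c ∈ F, ∃ l ∈ c, Literal.var l = n}
/-- Variables of a valuation. -/
def varsV (v : List Literal) : Set Nat := {n | ∃ l ∈ v, Literal.var l = n}
/-- Variables of a trail. -/
def varsT (M : Trail) : Set Nat := varsV (elements M)

/-- The formula of unit clauses corresponding to a list of literals. -/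
def valToForm (v : List Literal) : Formula := v.map (fun l => [l])

/-- A clause is unit in a valuation with unit literal `l`. -/
def isUnit (c : Clause) (l : Literal) (v : List Literal) : Prop :=
  l ∈ c ∧ l ∉ v ∧ l.opp ∉ v ∧ ∀ l' ∈ c, l' ≠ l → Literal.opp l' ∈ v

/-- `a` precedes `b` in the list `v` (first positions compared). -/
def precedes (a b : Literal) (v : List Literal) : Prop :=
  a ∈ v ∧ b ∈ v ∧ v.idxOf a < v.idxOf b

/-- A clause `c` is a reason for propagation of `l` in valuation `v`. -/
def isReason (c : Clause) (l : Literal) (v : List Literal) : Prop :=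
  l ∈ c ∧ l ∈ v ∧ ∀ l' ∈ c, l' ≠ l → Literal.opp l' ∈ v ∧ precedes (Literal.opp l') l v

/-- `l` is the literal of `c` asserted last in `v`. -/
def isLastAsserted (l : Literal) (c : List Literal) (v : List Literal) : Prop :=
  l ∈ c ∧ l ∈ v ∧ ∀ l' ∈ c, l' ∈ v → l' = l ∨ precedes l' l v

/-- The list of opposites of the literals of a clause. -/
def oppC (c : Clause) : List Literal := c.map Literal.opp

/-- `lv` is a backjump level for literal `l` and clause `c` w.r.t. trail `M`. -/
def isBackjumpLevel (lv : Nat) (l : Literal) (c : Clause) (M : Trail) : Prop :=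
  clauseFalse (elements M) c ∧ isLastAsserted l.opp (oppC c) (elements M) ∧
  lv < levelOf l.opp M ∧ ∀ l' ∈ c, l' ≠ l → levelOf (Literal.opp l') M ≤ lv

/-- Minimal backjump level. -/
def isMinimalBackjumpLevel (lv : Nat) (l : Literal) (c : Clause) (M : Trail) : Prop :=
  isBackjumpLevel lv l c M ∧ ∀ lv' < lv, ¬ isBackjumpLevel lv' l c M

/-- Unique implication point condition. -/
def isUIP (l : Literal) (c : Clause) (M : Trail) : Prop :=
  clauseFalse (elements M) c ∧ isLastAsserted l.opp (oppC c) (elements M) ∧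
  ∀ l' ∈ c, l' ≠ l → levelOf (Literal.opp l') M < levelOf l.opp M

/-- Resolution of clauses `C` and `c` over the literal `l`. -/
def resolve (C c : Clause) (l : Literal) : Clause :=
  C.filter (fun x => decide (x ≠ l)) ++ c.filter (fun x => decide (x ≠ l.opp))

/-- Lexicographic extension of a relation to lists. -/
def lexExt {X : Type _} (r : X → X → Prop) (s t : List X) : Prop :=
  (∃ rr, s = t ++ rr ∧ rr ≠ []) ∨
  (∃ rr s' t' a b, s = rr ++ a :: s' ∧ t = rr ++ b :: t' ∧ r a b)

/-- Ordering on annotated literals: decisions are greater than non-decisions. -/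
def litSucc (a b : Literal × Bool) : Prop := a.2 = true ∧ b.2 = false

/-- Trail ordering: lexicographic extension of `litSucc`. -/
def trailSucc : Trail → Trail → Prop := lexExt litSucc

/-- One step of the multiset extension of a relation. -/
def multExtStep {α : Type _} (r : α → α → Prop) (S1 S2 : Multiset α) : Prop :=
  ∃ (S S2' : Multiset α) (s1 : α), S1 = S + {s1} ∧ S2 = S + S2' ∧ ∀ s2 ∈ S2', r s1 s2

/-- Multiset extension: transitive closure of `multExtStep`. -/
def multExt {α : Type _} (r : α → α → Prop) : Multiset α → Multiset α → Prop :=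
  Relation.TransGen (multExtStep r)

/-- Clause ordering induced by a trail `M` (as a list of literals). -/
def clauseSucc (M : List Literal) (C1 C2 : Clause) : Prop :=
  multExt (fun a b => precedes a b M)
    ((oppC C2).dedup : Multiset Literal) ((oppC C1).dedup : Multiset Literal)

/-! ## Basic DPLL system -/

abbrev DState := Trail × Formula

def decideR (DecVars : Set Nat) (s1 s2 : DState) : Prop :=
  ∃ l : Literal, l.var ∈ DecVars ∧ l ∉ elements s1.1 ∧ l.opp ∉ elements s1.1 ∧
    s2.1 = s1.1 ++ [(l, true)] ∧ s2.2 = s1.2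

def unitPropagateR (s1 s2 : DState) : Prop :=
  ∃ c l, c ∈ s1.2 ∧ isUnit c l (elements s1.1) ∧
    s2.1 = s1.1 ++ [(l, false)] ∧ s2.2 = s1.2

def backtrackR (s1 s2 : DState) : Prop :=
  formulaFalse (elements s1.1) s1.2 ∧ decisions s1.1 ≠ [] ∧
  s2.1 = prefixBeforeLastDecision s1.1 ++ [((lastDecision s1.1).opp, false)] ∧ s2.2 = s1.2

def stepD (DecVars : Set Nat) (s1 s2 : DState) : Prop :=
  unitPropagateR s1 s2 ∨ backtrackR s1 s2 ∨ decideR DecVars s1 s2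

def accepting (DecVars : Set Nat) (s : DState) : Prop :=
  ¬ formulaFalse (elements s.1) s.2 ∧
  ¬ ∃ l : Literal, l.var ∈ DecVars ∧ l ∉ elements s.1 ∧ l.opp ∉ elements s.1

def rejecting (s : DState) : Prop :=
  formulaFalse (elements s.1) s.2 ∧ decisions s.1 = []

/-! ## Conflict analysis system -/

abbrev CState := Trail × Formula × Clause × Bool

def c_decide (DecVars : Set Nat) : CState → CState → Prop :=
  fun (M1, F1, C1, b1) (M2, F2, C2, b2) =>
    (∃ l : Literal, l.var ∈ DecVars ∧ l ∉ elements M1 ∧ l.opp ∉ elements M1 ∧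
      M2 = M1 ++ [(l, true)]) ∧ F2 = F1 ∧ C2 = C1 ∧ b2 = b1

def c_unitPropagate (Vars : Set Nat) : CState → CState → Prop :=
  fun (M1, F1, C1, b1) (M2, F2, C2, b2) =>
    (∃ (c : Clause) (l : Literal), entailsClause F1 c ∧ l.var ∈ Vars ∧
      isUnit c l (elements M1) ∧ M2 = M1 ++ [(l, false)]) ∧
    F2 = F1 ∧ C2 = C1 ∧ b2 = b1

def c_conflict : CState → CState → Prop :=
  fun (M1, F1, C1, b1) (M2, F2, C2, b2) =>
    b1 = false ∧ (∃ c : Clause, entailsClause F1 c ∧ clauseFalse (elements M1) c ∧ C2 = c) ∧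
    M2 = M1 ∧ F2 = F1 ∧ b2 = true ∧ C1 = C1

def c_explain : CState → CState → Prop :=
  fun (M1, F1, C1, b1) (M2, F2, C2, b2) =>
    b1 = true ∧ (∃ (l : Literal) (c : Clause), l ∈ C1 ∧ isReason c l.opp (elements M1) ∧
      entailsClause F1 c ∧ C2 = resolve C1 c l) ∧
    M2 = M1 ∧ F2 = F1 ∧ b2 = true

def c_backjump : CState → CState → Prop :=
  fun (M1, F1, C1, b1) (M2, F2, C2, b2) =>
    b1 = true ∧ (∃ (l : Literal) (lv : Nat), isBackjumpLevel lv l C1 M1 ∧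
      M2 = prefixToLevel lv M1 ++ [(l, false)]) ∧
    F2 = F1 ∧ C2 = [] ∧ b2 = false

def c_learn : CState → CState → Prop :=
  fun (M1, F1, C1, b1) (M2, F2, C2, b2) =>
    b1 = true ∧ C1 ∉ F1 ∧ M2 = M1 ∧ F2 = F1 ++ [C1] ∧ C2 = C1 ∧ b2 = b1

def stepC (F0 : Formula) (DecVars : Set Nat) (s1 s2 : CState) : Prop :=
  c_decide DecVars s1 s2 ∨ c_unitPropagate (varsF F0 ∪ DecVars) s1 s2 ∨
  c_conflict s1 s2 ∨ c_explain s1 s2 ∨ c_backjump s1 s2 ∨ c_learn s1 s2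

/-! ## System with restarts and forgetting -/

abbrev RState := Trail × Formula × Clause × Bool × Bool

def r_decide (F0 : Formula) (DecVars : Set Nat) : RState → RState → Prop :=
  fun (M1, Fl1, C1, cf1, ln1) (M2, Fl2, C2, cf2, ln2) =>
    (∃ l : Literal, l.var ∈ DecVars ∧ l ∉ elements M1 ∧ l.opp ∉ elements M1 ∧
      M2 = M1 ++ [(l, true)]) ∧
    (¬ ∃ (c : Clause) (l : Literal), c ∈ F0 ++ Fl1 ∧ isUnit c l (elements M1)) ∧
    Fl2 = Fl1 ∧ C2 = C1 ∧ cf2 = cf1 ∧ ln2 = ln1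

def r_unitPropagate (F0 : Formula) : RState → RState → Prop :=
  fun (M1, Fl1, C1, cf1, ln1) (M2, Fl2, C2, cf2, ln2) =>
    (∃ (c : Clause) (l : Literal), c ∈ F0 ++ Fl1 ∧ isUnit c l (elements M1) ∧
      M2 = M1 ++ [(l, false)]) ∧
    Fl2 = Fl1 ∧ C2 = C1 ∧ cf2 = cf1 ∧ ln2 = ln1

def r_conflict (F0 : Formula) : RState → RState → Prop :=
  fun (M1, Fl1, C1, cf1, ln1) (M2, Fl2, C2, cf2, ln2) =>
    cf1 = false ∧ (∃ c : Clause, c ∈ F0 ++ Fl1 ∧ clauseFalse (elements M1) c ∧ C2 = c) ∧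
    M2 = M1 ∧ Fl2 = Fl1 ∧ cf2 = true ∧ ln2 = ln1 ∧ C1 = C1

def r_explain (F0 : Formula) : RState → RState → Prop :=
  fun (M1, Fl1, C1, cf1, ln1) (M2, Fl2, C2, cf2, ln2) =>
    cf1 = true ∧ (∃ (l : Literal) (c : Clause), l ∈ C1 ∧ isReason c l.opp (elements M1) ∧
      c ∈ F0 ++ Fl1 ∧ C2 = resolve C1 c l) ∧
    M2 = M1 ∧ Fl2 = Fl1 ∧ cf2 = true ∧ ln2 = ln1

def r_backjumpLearn : RState → RState → Prop :=
  fun (M1, Fl1, C1, cf1, _ln1) (M2, Fl2, C2, cf2, ln2) =>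
    cf1 = true ∧ (∃ (l : Literal) (lv : Nat), isMinimalBackjumpLevel lv l C1 M1 ∧
      M2 = prefixToLevel lv M1 ++ [(l, false)]) ∧
    Fl2 = Fl1 ++ [C1] ∧ C2 = [] ∧ cf2 = false ∧ ln2 = true

def r_forget : RState → RState → Prop :=
  fun (M1, Fl1, C1, cf1, ln1) (M2, Fl2, C2, cf2, ln2) =>
    cf1 = false ∧ ln1 = true ∧
    (∃ Fc : Formula, (∀ c ∈ Fc, c ∈ Fl1) ∧
      (∀ c ∈ Fc, ¬ ∃ l : Literal, isReason c l (elements M1)) ∧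
      Fl2 = Fl1.filter (fun c => decide (c ∉ Fc))) ∧
    M2 = M1 ∧ C2 = C1 ∧ cf2 = cf1 ∧ ln2 = false

def r_restart : RState → RState → Prop :=
  fun (M1, Fl1, C1, cf1, ln1) (M2, Fl2, C2, cf2, ln2) =>
    cf1 = false ∧ ln1 = true ∧
    M2 = prefixToLevel 0 M1 ∧ Fl2 = Fl1 ∧ C2 = C1 ∧ cf2 = cf1 ∧ ln2 = false

/-- The system without `forget` (with `restart`). -/
def stepF (F0 : Formula) (DecVars : Set Nat) (s1 s2 : RState) : Prop :=
  r_decide F0 DecVars s1 s2 ∨ r_unitPropagate F0 s1 s2 ∨ r_conflict F0 s1 s2 ∨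
  r_explain F0 s1 s2 ∨ r_backjumpLearn s1 s2 ∨ r_restart s1 s2

/-- The full system with both `restart` and `forget`. -/
def stepAll (F0 : Formula) (DecVars : Set Nat) (s1 s2 : RState) : Prop :=
  stepF F0 DecVars s1 s2 ∨ r_forget s1 s2

/-- Normalization of a formula: remove duplicate literals and duplicate clauses. -/
def normF (F : Formula) : Formula := (F.map List.dedup).dedup


/-! ### Auxiliary lemmas for STATEMENT 7 -/

lemma opp_opp (l : Literal) : l.opp.opp = l := by cases l <;> rfl

lemma elements_append (A B : Trail) : elements (A ++ B) = elements A ++ elements B := by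
  simp [elements]

lemma decisions_append (A B : Trail) : decisions (A ++ B) = decisions A ++ decisions B := by
  simp [decisions, List.filter_append]

lemma prefix_concat' {α : Type _} {l : List α} {a : α} {P : List α} (h : P <+: l ++ [a]) :
    P <+: l ∨ P = l ++ [a] := by
  obtain ⟨t, ht⟩ := h
  rcases t.eq_nil_or_concat with rfl | ⟨t', b, rfl⟩
  · right; simpa using ht
  · left
    refine ⟨t', ?_⟩
    have h2 : (P ++ t') ++ [b] = l ++ [a] := by simpa using ht
    have h3 := congrArg List.dropLast h2
    simpa using h3

/-- The key semantic invariant for the basic DPLL system. -/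
def Inv (F0 : Formula) (M : Trail) : Prop :=
  (elements M).Nodup ∧ consistent (elements M) ∧
  ∀ v, isModel v F0 → ∀ P : Trail, P <+: M →
    (∀ d ∈ decisions P, d.opp ∉ v) → ∀ l ∈ elements P, l.opp ∉ v

lemma inv_nil (F0 : Formula) : Inv F0 [] := by
  refine ⟨by simp [elements], by simp [consistent, elements], ?_⟩
  intro v hv P hP
  have : P = [] := List.prefix_nil.mp hP
  subst this
  simp [elements]

lemma inv_append {F0 : Formula} {M : Trail} {l : Literal} {b : Bool}
    (hInv : Inv F0 M) (h1 : l ∉ elements M) (h2 : l.opp ∉ elements M)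
    (hent : ∀ v, isModel v F0 → (∀ d ∈ decisions (M ++ [(l, b)]), d.opp ∉ v) →
      (∀ m ∈ elements M, m.opp ∉ v) → l.opp ∉ v) :
    Inv F0 (M ++ [(l, b)]) := by
  obtain ⟨hnd, hcon, hsem⟩ := hInv
  have helts : elements (M ++ [(l, b)]) = elements M ++ [l] := by simp [elements]
  refine ⟨?_, ?_, ?_⟩
  · rw [helts, List.nodup_append]
    refine ⟨hnd, List.nodup_singleton l, ?_⟩
    intro x hx y hy hxy
    rcases List.mem_singleton.mp hy with rfl
    rw [hxy] at hx
    exact h1 hx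
  · rintro ⟨x, hx1, hx2⟩
    rw [helts, List.mem_append] at hx1 hx2
    rcases hx1 with hx1 | hx1 <;> rcases hx2 with hx2 | hx2
    · exact hcon ⟨x, hx1, hx2⟩
    · rcases List.mem_singleton.mp hx2 with h
      apply h2
      rw [← h, opp_opp]
      exact hx1
    · rcases List.mem_singleton.mp hx1 with rfl
      exact h2 hx2
    · have hq := List.mem_singleton.mp hx1
      have hq' := List.mem_singleton.mp hx2
      rw [hq] at hq'
      cases l <;> simp [Literal.opp] at hq' 
  · intro v hv P hP hdec
    rcases prefix_concat' hP with hP | rfl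
    · exact hsem v hv P hP hdec
    · have hdecM : ∀ d ∈ decisions M, d.opp ∉ v := by
        intro d hd
        exact hdec d (by rw [decisions_append]; exact List.mem_append_left _ hd)
      have hM : ∀ m ∈ elements M, m.opp ∉ v := hsem v hv M List.prefix_rfl hdecM
      have hl := hent v hv hdec hM
      intro m hm
      rw [helts, List.mem_append] at hm
      rcases hm with hm | hm
      · exact hM m hm
      · rcases List.mem_singleton.mp hm with rfl
        exact hl

lemma backtrack_decomp (M : Trail) (h : decisions M ≠ []) :
    ∃ R : Trail, M = prefixBeforeLastDecision M ++ ((lastDecision M), true) :: R ∧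
      (∀ a ∈ R, a.2 = false) := by
  set p : Literal × Bool → Bool := fun a => !a.2 with hp
  have hne : M.reverse.dropWhile p ≠ [] := by
    intro hnil
    apply h
    have hall := List.dropWhile_eq_nil_iff.mp hnil
    have : M.filter (fun a => a.2) = [] := by
      apply List.filter_eq_nil_iff.mpr
      intro a ha
      have := hall a (List.mem_reverse.mpr ha)
      simp [hp] at this
      simp [this]
    simp [decisions, this]
  obtain ⟨x, xs, hcons⟩ := List.exists_cons_of_ne_nil hne
  have hx2 : x.2 = true := by
    have h0 := List.head_dropWhile_not p (l := M.reverse) hne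
    have h1 : (M.reverse.dropWhile p).head hne = x := by
      have h2 := congrArg List.head? hcons
      rw [List.head?_eq_head] at h2
      simpa using h2
    rw [h1] at h0
    simpa [hp] using h0
  have hsplit : M.reverse = M.reverse.takeWhile p ++ (x :: xs) := by
    rw [← hcons, List.takeWhile_append_dropWhile]
  have hM : M = xs.reverse ++ x :: (M.reverse.takeWhile p).reverse := by
    have := congrArg List.reverse hsplit
    simpa using this
  have hpre : prefixBeforeLastDecision M = xs.reverse := by
    have hc' : List.dropWhile (fun a : Literal × Bool => !a.2) M.reverse = x :: xs := hcons
    simp [prefixBeforeLastDecision, hc']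
  have hSfalse : ∀ a ∈ (M.reverse.takeWhile p).reverse, a.2 = false := by
    intro a ha
    have := List.mem_takeWhile_imp (List.mem_reverse.mp ha)
    simpa [hp] using this
  have hdecS : decisions (M.reverse.takeWhile p).reverse = [] := by
    have : ((M.reverse.takeWhile p).reverse).filter (fun a => a.2) = [] := by
      apply List.filter_eq_nil_iff.mpr
      intro a ha
      simp [hSfalse a ha]
    simp [decisions, this]
  have hlast : lastDecision M = x.1 := by
    have hdm : decisions M = decisions xs.reverse ++ [x.1] := by
      conv_lhs => rw [hM]
      rw [show (xs.reverse ++ x :: (M.reverse.takeWhile p).reverse)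
            = xs.reverse ++ [x] ++ (M.reverse.takeWhile p).reverse by simp]
      rw [decisions_append, decisions_append, hdecS]
      simp [decisions, hx2]
    simp [lastDecision, hdm, List.getLastD_concat]
  refine ⟨(M.reverse.takeWhile p).reverse, ?_, hSfalse⟩
  rw [hpre, hlast]
  have hx : ((x.1 : Literal), true) = x := by
    rw [Prod.ext_iff]
    exact ⟨rfl, hx2.symm⟩
  rw [hx]
  exact hM

lemma inv_backtrack {F0 : Formula} {M : Trail} (hInv : Inv F0 M)
    (hff : formulaFalse (elements M) F0) (hd : decisions M ≠ []) :
    Inv F0 (prefixBeforeLastDecision M ++ [((lastDecision M).opp, false)]) := by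
  obtain ⟨R, hM, hR⟩ := backtrack_decomp M hd
  set N := prefixBeforeLastDecision M with hN
  set d := lastDecision M with hdd
  have hNpre : N <+: M := ⟨(d, true) :: R, hM.symm⟩
  have heltsM : elements M = elements N ++ d :: elements R := by
    conv_lhs => rw [hM]
    simp [elements]
  have hdmem : d ∈ elements M := by
    rw [heltsM]
    exact List.mem_append_right _ List.mem_cons_self
  have hNsub : ∀ x ∈ elements N, x ∈ elements M := by
    intro x hx
    rw [heltsM]
    exact List.mem_append_left _ hx
  have hInvN : Inv F0 N := by
    refine ⟨?_, ?_, ?_⟩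
    · have := hInv.1
      rw [heltsM, List.nodup_append] at this
      exact this.1
    · rintro ⟨x, hx1, hx2⟩
      exact hInv.2.1 ⟨x, hNsub x hx1, hNsub _ hx2⟩
    · intro v hv P hP hdec
      exact hInv.2.2 v hv P (hP.trans hNpre) hdec
  have h1 : d.opp ∉ elements N := by
    intro hin
    exact hInv.2.1 ⟨d, hdmem, hNsub _ hin⟩
  have h2 : (d.opp).opp ∉ elements N := by
    rw [opp_opp]
    intro hin
    have hnd := hInv.1
    rw [heltsM, List.nodup_append] at hnd
    exact hnd.2.2 _ hin _ List.mem_cons_self rfl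
  refine inv_append hInvN h1 h2 ?_
  intro v hv hdec hNv
  rw [opp_opp]
  intro hdv
  have hdecsM : decisions M = decisions N ++ [d] := by
    conv_lhs => rw [hM]
    rw [decisions_append]
    have : decisions ((d, true) :: R) = [d] := by
      have : R.filter (fun a => a.2) = [] := by
        apply List.filter_eq_nil_iff.mpr
        intro a ha
        simp [hR a ha]
      simp [decisions, this]
    rw [this]
  have hdecM : ∀ dd ∈ decisions M, dd.opp ∉ v := by
    intro dd hddm
    rw [hdecsM, List.mem_append] at hddm
    rcases hddm with hddm | hddm
    · apply hdec
      rw [decisions_append]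
      exact List.mem_append_left _ hddm
    · rw [List.mem_singleton.mp hddm]
      intro hc
      exact hv.1 ⟨d, hdv, hc⟩
  have hall := hInv.2.2 v hv M List.prefix_rfl hdecM
  obtain ⟨c, hc, hcf⟩ := hff
  obtain ⟨l', hl'c, hl'v⟩ := hv.2 c hc
  have h := hall _ (hcf l' hl'c)
  rw [opp_opp] at h
  exact h hl'v

lemma reach_inv (DecVars : Set Nat) (F0 : Formula) :
    ∀ s : DState, Relation.ReflTransGen (stepD DecVars) ([], F0) s →
      s.2 = F0 ∧ Inv F0 s.1 := by
  intro s h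
  induction h with
  | refl => exact ⟨rfl, inv_nil F0⟩
  | tail hsteps hstep ih =>
    obtain ⟨hF, hInv⟩ := ih
    rcases hstep with hup | hbt | hdec
    · obtain ⟨c, l, hcF, hunit, hM2, hF2⟩ := hup
      rw [hF2, hM2]
      refine ⟨hF, ?_⟩
      refine inv_append hInv hunit.2.1 hunit.2.2.1 ?_
      intro v hv _ hNv
      have hcF0 : c ∈ F0 := hF ▸ hcF
      obtain ⟨l', hl'c, hl'v⟩ := hv.2 c hcF0
      by_cases hne : l' = l
      · subst hne
        intro hoppv
        exact hv.1 ⟨l', hl'v, hoppv⟩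
      · have hmem := hunit.2.2.2 l' hl'c hne
        have h := hNv _ hmem
        rw [opp_opp] at h
        exact absurd hl'v h
    · obtain ⟨hff, hd, hM2, hF2⟩ := hbt
      rw [hF2, hM2]
      refine ⟨hF, ?_⟩
      exact inv_backtrack hInv (hF ▸ hff) hd
    · obtain ⟨l, hvar, h1, h2, hM2, hF2⟩ := hdec
      rw [hF2, hM2]
      refine ⟨hF, ?_⟩
      refine inv_append hInv h1 h2 ?_
      intro v hv hdecv _
      apply hdecv
      rw [decisions_append]
      apply List.mem_append_right
      simp [decisions]

/-- soundness of the basic DPLL transition system. -/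
theorem stmt7 (DecVars : Set Nat) (F0 : Formula) (M : Trail) (F : Formula)
    (h : Relation.ReflTransGen (stepD DecVars) ([], F0) (M, F)) :
    (varsF F0 ⊆ DecVars → accepting DecVars (M, F) →
      sat F0 ∧ isModel (elements M) F0) ∧
    (rejecting (M, F) → ¬ sat F0) := by
  obtain ⟨hF, hInv⟩ := reach_inv DecVars F0 (M, F) h
  constructor
  · intro hsub hacc
    have hmodel : isModel (elements M) F0 := by
      refine ⟨hInv.2.1, ?_⟩
      intro c hc
      have hnotfalse : ¬ clauseFalse (elements M) c := by
        intro hcf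
        exact hacc.1 ⟨c, hF ▸ hc, hcf⟩
      obtain ⟨l, hlc, hlo⟩ : ∃ l ∈ c, l.opp ∉ elements M := by
        by_contra hno
        push_neg at hno
        exact hnotfalse hno
      have hvar : l.var ∈ DecVars := hsub ⟨c, hc, l, hlc, rfl⟩
      by_cases hmem : l ∈ elements M
      · exact ⟨l, hlc, hmem⟩
      · exact absurd ⟨l, hvar, hmem, hlo⟩ hacc.2
    exact ⟨⟨_, hmodel⟩, hmodel⟩
  · rintro ⟨hff, hd⟩ ⟨v, hv⟩
    have hall := hInv.2.2 v hv M List.prefix_rfl (by rw [hd]; simp)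
    obtain ⟨c, hc, hcf⟩ := hff
    obtain ⟨l', hl'c, hl'v⟩ := hv.2 c (hF ▸ hc)
    have h := hall _ (hcf l' hl'c)
    rw [opp_opp] at h
    exact h hl'v

end SatFormal
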